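/- Let k ≥ 2 and let T be a tree with a k-twin u that is a leaf. Then mdi_k(T ∖ u) ≤ mdi_k(T) − 1, where T ∖ u is the tree obtained from T by deleting u. Moreover, if T has a unique k-MDIS containing u, then mdi_k(T ∖ u) = mdi_k(T) − 1. -/

import Mathlib

/-- `J` is a distance-`k` independent set in `G`: any two distinct vertices of `J`
are at graph distance at least `k + 1`. -/
def DkIndep {V : Type*} (G : SimpleGraph V) (k : ℕ) (J : Set V) : Prop :=
  ∀ ⦃u⦄, u ∈ J → ∀ ⦃v⦄, v ∈ J → u ≠ v → k + 1 ≤ G.dist u v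

/-- `J` is a maximal distance-`k` independent set (`k`-MDIS) of `G`. -/
def MaxDkIndep {V : Type*} (G : SimpleGraph V) (k : ℕ) (J : Set V) : Prop :=
  DkIndep G k J ∧ ∀ J', DkIndep G k J' → J ⊆ J' → J' = J

/-- `mdi G k` is the number of maximal distance-`k` independent sets of `G`. -/
noncomputable def mdi {V : Type*} (G : SimpleGraph V) (k : ℕ) : ℕ :=
  {J : Set V | MaxDkIndep G k J}.ncard

/-- `f_k(n)` from the paper. -/
def fk (k n : ℕ) : ℕ :=
  if n ≤ k + 1 then n else n - (n - k % 2) / (k / 2 + 1) + 1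

/-- closed ball `N_k[x]`. -/
def ball {V : Type*} (G : SimpleGraph V) (k : ℕ) (x : V) : Set V :=
  {v | G.dist x v ≤ k}

/-- a leaf is a vertex of degree 1. -/
def IsLeaf {V : Type*} (G : SimpleGraph V) (v : V) : Prop :=
  (G.neighborSet v).ncard = 1

/-- eccentricity of a vertex. -/
noncomputable def ecc {V : Type*} [Fintype V] (G : SimpleGraph V) (v : V) : ℕ :=
  Finset.univ.sup (G.dist v)

/-- diameter of a finite graph. -/
noncomputable def gdiam {V : Type*} [Fintype V] (G : SimpleGraph V) : ℕ :=
  Finset.univ.sup (ecc G)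

/-- a central vertex is one of minimum eccentricity. -/
def IsCentral {V : Type*} [Fintype V] (G : SimpleGraph V) (v : V) : Prop :=
  ∀ u, ecc G v ≤ ecc G u

/-- a `k`-twin: some other vertex has the same closed `k`-ball. -/
def KTwin {V : Type*} (G : SimpleGraph V) (k : ℕ) (u : V) : Prop :=
  ∃ v, v ≠ u ∧ ball G k u = ball G k v

/-- a diametral leaf: a leaf whose eccentricity equals the diameter. -/
def IsDiametralLeaf {V : Type*} [Fintype V] (G : SimpleGraph V) (u : V) : Prop :=
  IsLeaf G u ∧ ecc G u = gdiam G

/-- a `k`-special pair. -/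
def KSpecial {V : Type*} [Fintype V] (G : SimpleGraph V) (k : ℕ) (x y : V) : Prop :=
  IsDiametralLeaf G x ∧ IsDiametralLeaf G y ∧ KTwin G k x ∧ KTwin G k y ∧
    ball G k x ≠ ball G k y

/-- `mdi*_k(G, ℓ)`. -/
noncomputable def mdiStar {V : Type*} (G : SimpleGraph V) (k : ℕ) (ℓ : V) : ℕ :=
  {J : Set V | MaxDkIndep G k J ∧ ℓ ∈ J ∧ ∃ w ∉ J, ball G k w ∩ J = {ℓ}}.ncard

/-- The spider tree `S_{p,m}`: a center (`none`) together with `p` legs of `m` vertices. -/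
def spider (p m : ℕ) : SimpleGraph (Option (Fin p × Fin m)) :=
  SimpleGraph.fromRel fun a b =>
    match a, b with
    | none, some (_, j) => (j : ℕ) = 0
    | some (i, j), some (i', j') => i = i' ∧ (j : ℕ) + 1 = (j' : ℕ)
    | _, _ => False

/-- `S'_{p,m}`: the spider `S_{p,m}` with one leaf at distance `m` from the center removed. -/
def spider' (p m : ℕ) (hp : 0 < p) (hm : 0 < m) :=
  (spider p m).induce
    {v | v ≠ some (⟨0, hp⟩, ⟨m - 1, Nat.sub_lt hm Nat.one_pos⟩)}

/-- The double spider `B_{p₁,p₂,s}`: two adjacent centers (`Sum.inl false`, `Sum.inl true`),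
with `p₁` legs of `s` vertices on the first and `p₂` legs of `s` vertices on the second. -/
def btree (p₁ p₂ s : ℕ) : SimpleGraph (Bool ⊕ ((Fin p₁ ⊕ Fin p₂) × Fin s)) :=
  SimpleGraph.fromRel fun a b =>
    match a, b with
    | Sum.inl x, Sum.inl y => x ≠ y
    | Sum.inl false, Sum.inr (Sum.inl _, j) => (j : ℕ) = 0
    | Sum.inl true, Sum.inr (Sum.inr _, j) => (j : ℕ) = 0
    | Sum.inr (c, j), Sum.inr (c', j') => c = c' ∧ (j : ℕ) + 1 = (j' : ℕ)
    | _, _ => False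

/-- `G` contains a subgraph isomorphic to `H`. -/
def ContainsSub {V W : Type*} (G : SimpleGraph V) (H : SimpleGraph W) : Prop :=
  ∃ f : W → V, Function.Injective f ∧ ∀ a b, H.Adj a b → G.Adj (f a) (f b)

/-- A pendant path on `s` vertices `P 0, …, P (s-1)` attached to `w`:
`P 0` is a leaf, consecutive vertices are adjacent, interior vertices have degree 2,
and `P (s-1)` is adjacent to `w`. -/
def IsPendantPath {V : Type*} (T : SimpleGraph V) (s : ℕ) (P : ℕ → V) (w : V) : Prop :=
  Set.InjOn P (Set.Iio s) ∧ (∀ i < s, P i ≠ w) ∧ IsLeaf T (P 0) ∧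
    (∀ i, i + 1 < s → T.Adj (P i) (P (i + 1))) ∧
    (∀ i, 0 < i → i < s → (T.neighborSet (P i)).ncard = 2) ∧
    T.Adj (P (s - 1)) w

/-- Isomorphism of simple graphs on `Fin n` as a setoid. -/
def graphSetoid (n : ℕ) : Setoid (SimpleGraph (Fin n)) where
  r G H := Nonempty (G ≃g H)
  iseqv := ⟨fun _ => ⟨SimpleGraph.Iso.refl⟩, fun ⟨e⟩ => ⟨e.symm⟩, fun ⟨e⟩ ⟨f⟩ => ⟨e.trans f⟩⟩

/-- The number of isomorphism classes of graphs in a set of graphs on `Fin n`. -/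
noncomputable def numIsoClasses {n : ℕ} (S : Set (SimpleGraph (Fin n))) : ℕ :=
  ((fun G => Quotient.mk (graphSetoid n) G) '' S).ncard


section Aux

open SimpleGraph

/-- In a graph with a leaf `u`, any path between vertices different from `u`
can be transferred to the induced subgraph on `{v | v ≠ u}`. -/
lemma walk_avoid_leaf {V : Type*} (T : SimpleGraph V) (u : V) (hu : IsLeaf T u) :
    ∀ {x y : V} (p : T.Walk x y), p.IsPath → ∀ (hx : x ≠ u) (hy : y ≠ u),
    ∃ q : (T.induce {v | v ≠ u}).Walk ⟨x, hx⟩ ⟨y, hy⟩, q.length ≤ p.length := by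
  intro x y p
  induction p with
  | nil => intro _ hx hy; exact ⟨.nil, le_rfl⟩
  | @cons x b y h p ih =>
    intro hp hx hy
    by_cases hb : b = u
    · subst hb
      cases p with
      | nil => exact absurd rfl hy
      | @cons _ c _ h2 p2 =>
        exfalso
        obtain ⟨a, ha⟩ := Set.ncard_eq_one.mp hu
        have hxa : x = a := by
          have hx' := h.symm
          rw [← SimpleGraph.mem_neighborSet, ha, Set.mem_singleton_iff] at hx'
          exact hx'
        have hca : c = a := by
          have hc' := h2
          rw [← SimpleGraph.mem_neighborSet, ha, Set.mem_singleton_iff] at hc'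
          exact hc'
        have hp' := (SimpleGraph.Walk.cons_isPath_iff _ _).mp hp
        apply hp'.2
        rw [SimpleGraph.Walk.support_cons]
        exact List.mem_cons_of_mem _ (by rw [hxa, ← hca]; exact p2.start_mem_support)
    · obtain ⟨q, hq⟩ := ih hp.of_cons hb hy
      exact ⟨SimpleGraph.Walk.cons (by exact h) q, by
        exact Nat.succ_le_succ hq⟩

/-- The homomorphism from an induced subgraph back to the graph. -/
def induceHomAux {V : Type*} (T : SimpleGraph V) (s : Set V) : T.induce s →g T :=
  ⟨Subtype.val, fun {a b} h => h⟩

lemma dist_induce_leaf {V : Type*} (T : SimpleGraph V) (hc : T.Connected)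
    (u : V) (hu : IsLeaf T u) {x y : V} (hx : x ≠ u) (hy : y ≠ u) :
    (T.induce {v | v ≠ u}).dist ⟨x, hx⟩ ⟨y, hy⟩ = T.dist x y := by
  classical
  obtain ⟨p, hp⟩ := hc.exists_walk_length_eq_dist x y
  obtain ⟨q, hq⟩ := walk_avoid_leaf T u hu p.bypass p.bypass_isPath hx hy
  have h1 : (T.induce {v | v ≠ u}).dist ⟨x, hx⟩ ⟨y, hy⟩ ≤ T.dist x y := by
    calc (T.induce {v | v ≠ u}).dist ⟨x, hx⟩ ⟨y, hy⟩ ≤ q.length := SimpleGraph.dist_le q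
    _ ≤ p.bypass.length := hq
    _ ≤ p.length := p.length_bypass_le
    _ = T.dist x y := hp
  have hr : (T.induce {v | v ≠ u}).Reachable ⟨x, hx⟩ ⟨y, hy⟩ := ⟨q⟩
  obtain ⟨q', hq'⟩ := hr.exists_walk_length_eq_dist
  have h2 : T.dist x y ≤ (T.induce {v | v ≠ u}).dist ⟨x, hx⟩ ⟨y, hy⟩ := by
    have := SimpleGraph.dist_le (q'.map (induceHomAux T {v | v ≠ u}))
    rwa [SimpleGraph.Walk.length_map, hq'] at this
  omega

end Aux

/-- If `u` is a leaf of the tree `T` that is a `k`-twin (`k ≥ 2`), then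
`mdi_k(T ∖ u) ≤ mdi_k(T) − 1`; moreover if `T` has a unique `k`-MDIS containing `u`,
then `mdi_k(T ∖ u) = mdi_k(T) − 1`. -/
theorem stmt_6 {V : Type} [Fintype V] (k : ℕ) (hk : 2 ≤ k) (T : SimpleGraph V)
    (hT : T.IsTree) (u : V) (htwin : KTwin T k u) (hu : IsLeaf T u) :
    mdi (T.induce {v | v ≠ u}) k ≤ mdi T k - 1 ∧
    ((∃! J : Set V, MaxDkIndep T k J ∧ u ∈ J) →
      mdi (T.induce {v | v ≠ u}) k = mdi T k - 1) := by
  classical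
  obtain ⟨v, hvu, hball⟩ := htwin
  have hc := hT.isConnected
  set s : Set V := {v | v ≠ u} with hs
  set T' := T.induce s with hT'def
  have hdist : ∀ (x y : V) (hx : x ≠ u) (hy : y ≠ u),
      T'.dist ⟨x, hx⟩ ⟨y, hy⟩ = T.dist x y := fun x y hx hy =>
    dist_induce_leaf T hc u hu hx hy
  -- independence transfer
  have hind : ∀ J' : Set ↥s, DkIndep T' k J' ↔ DkIndep T k (Subtype.val '' J') := by
    intro J'
    constructor
    · rintro h a ⟨a', ha', rfl⟩ b ⟨b', hb', rfl⟩ hab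
      have hab' : a' ≠ b' := fun e => hab (by rw [e])
      have := h ha' hb' hab'
      rwa [show a' = ⟨a'.1, a'.2⟩ from rfl, show b' = ⟨b'.1, b'.2⟩ from rfl,
        hdist a'.1 b'.1 a'.2 b'.2] at this
    · intro h a ha b hb hab
      have hab' : (a : V) ≠ (b : V) := fun e => hab (Subtype.ext e)
      have := h ⟨a, ha, rfl⟩ ⟨b, hb, rfl⟩ hab'
      rwa [show a = ⟨a.1, a.2⟩ from rfl, show b = ⟨b.1, b.2⟩ from rfl,
        hdist a.1 b.1 a.2 b.2]
  have hvs : v ∈ s := hvu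
  -- key twin fact: for any T'-maximal J', some j ∈ J' is within distance k of u in T
  have hkey : ∀ J' : Set ↥s, MaxDkIndep T' k J' → ∃ j ∈ J', T.dist u (j : V) ≤ k := by
    intro J' hJ'
    have huv : T.dist u v ≤ k := by
      have : u ∈ ball T k v := by
        rw [← hball]
        show T.dist u u ≤ k
        simp [SimpleGraph.dist_self]
      have : T.dist v u ≤ k := this
      rwa [SimpleGraph.dist_comm] at this
    have hball' : ∀ w : V, T.dist v w ≤ k → T.dist u w ≤ k := by
      intro w hw
      have : w ∈ ball T k v := hw
      rw [← hball] at this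
      exact this
    by_cases hmem : DkIndep T' k (insert ⟨v, hvs⟩ J')
    · have heq := hJ'.2 _ hmem (Set.subset_insert _ _)
      have hvJ : (⟨v, hvs⟩ : ↥s) ∈ J' := heq ▸ Set.mem_insert _ _
      exact ⟨⟨v, hvs⟩, hvJ, huv⟩
    · simp only [DkIndep, not_forall] at hmem
      obtain ⟨a, ha, b, hb, hab, hd⟩ := hmem
      have hd' : T'.dist a b ≤ k := by omega
      rcases Set.mem_insert_iff.mp ha with rfl | haJ
      · rcases Set.mem_insert_iff.mp hb with rfl | hbJ
        · exact absurd rfl hab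
        · refine ⟨b, hbJ, ?_⟩
          apply hball'
          rw [show b = ⟨b.1, b.2⟩ from rfl, hdist v b.1 hvu b.2] at hd'
          exact hd'
      · rcases Set.mem_insert_iff.mp hb with rfl | hbJ
        · refine ⟨a, haJ, ?_⟩
          apply hball'
          rw [SimpleGraph.dist_comm, show a = ⟨a.1, a.2⟩ from rfl,
            hdist v a.1 hvu a.2] at hd'
          exact hd'
        · exact absurd (hJ'.1 haJ hbJ hab) (by omega)
  -- forward: MDIS of T' gives MDIS of T avoiding u
  have fwd : ∀ J' : Set ↥s, MaxDkIndep T' k J' →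
      MaxDkIndep T k (Subtype.val '' J') := by
    intro J' hJ'
    refine ⟨(hind J').mp hJ'.1, ?_⟩
    intro J'' hJ''ind hsub
    obtain ⟨j, hjJ, hj⟩ := hkey J' hJ'
    have huJ'' : u ∉ J'' := by
      intro huJ
      have hjmem : (j : V) ∈ J'' := hsub ⟨j, hjJ, rfl⟩
      have hne : u ≠ (j : V) := fun e => j.2 e.symm
      have := hJ''ind huJ hjmem hne
      omega
    set K : Set ↥s := Subtype.val ⁻¹' J'' with hK
    have hKim : Subtype.val '' K = J'' := by
      ext w
      simp only [hK, Set.mem_image, Set.mem_preimage, Subtype.exists, exists_and_right,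
        exists_eq_right]
      constructor
      · rintro ⟨_, hw⟩; exact hw
      · intro hw
        exact ⟨fun e => huJ'' (e ▸ hw), hw⟩
    have hKind : DkIndep T' k K := (hind K).mpr (hKim ▸ hJ''ind)
    have hKsub : J' ⊆ K := fun a haJ => hsub ⟨a, haJ, rfl⟩
    have := hJ'.2 K hKind hKsub
    rw [← hKim, this]
  -- backward: MDIS of T avoiding u gives MDIS of T'
  have bwd : ∀ J : Set V, MaxDkIndep T k J → u ∉ J →
      MaxDkIndep T' k (Subtype.val ⁻¹' J : Set ↥s) ∧
        Subtype.val '' (Subtype.val ⁻¹' J : Set ↥s) = J := by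
    intro J hJ huJ
    have him : Subtype.val '' (Subtype.val ⁻¹' J : Set ↥s) = J := by
      ext w
      simp only [Set.mem_image, Set.mem_preimage, Subtype.exists, exists_and_right,
        exists_eq_right]
      constructor
      · rintro ⟨_, hw⟩; exact hw
      · intro hw
        exact ⟨fun e => huJ (e ▸ hw), hw⟩
    refine ⟨⟨(hind _).mpr (by rw [him]; exact hJ.1), ?_⟩, him⟩
    intro K hKind hKsub
    have h1 : J ⊆ Subtype.val '' K := by
      intro w hw
      have hws : w ≠ u := fun e => huJ (e ▸ hw)
      exact ⟨⟨w, hws⟩, hKsub hw, rfl⟩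
    have h2 := hJ.2 _ ((hind K).mp hKind) h1
    have : Subtype.val '' K = Subtype.val '' (Subtype.val ⁻¹' J : Set ↥s) := by
      rw [h2, him]
    exact Set.image_injective.mpr Subtype.val_injective this
  -- counting
  set S0 : Set (Set V) := {J | MaxDkIndep T k J ∧ u ∉ J} with hS0
  set S1 : Set (Set V) := {J | MaxDkIndep T k J ∧ u ∈ J} with hS1
  have hS : {J : Set V | MaxDkIndep T k J} = S0 ∪ S1 := by
    ext J
    simp only [hS0, hS1, Set.mem_setOf_eq, Set.mem_union]
    tauto
  have hdisj : Disjoint S0 S1 := by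
    rw [Set.disjoint_left]
    rintro J ⟨_, h0⟩ ⟨_, h1⟩
    exact h0 h1
  have hcard : mdi T k = S0.ncard + S1.ncard := by
    rw [mdi, hS, Set.ncard_union_eq hdisj (Set.toFinite _) (Set.toFinite _)]
  have himg : (fun J' : Set ↥s => Subtype.val '' J') '' {J' | MaxDkIndep T' k J'} = S0 := by
    ext J
    constructor
    · rintro ⟨J', hJ', rfl⟩
      exact ⟨fwd J' hJ', fun ⟨a, _, ha⟩ => a.2 ha⟩
    · rintro ⟨hJ, huJ⟩
      obtain ⟨hmax, him⟩ := bwd J hJ huJ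
      exact ⟨_, hmax, him⟩
  have hT'card : mdi T' k = S0.ncard := by
    rw [mdi, ← himg,
      Set.ncard_image_of_injective _ (Set.image_injective.mpr Subtype.val_injective)]
  -- S1 is nonempty
  have hex : ∃ J : Set V, MaxDkIndep T k J ∧ u ∈ J := by
    have hsingle : DkIndep T k {u} ∧ u ∈ ({u} : Set V) := by
      refine ⟨?_, rfl⟩
      rintro a rfl b rfl hab
      exact absurd rfl hab
    obtain ⟨J, hJmem, hJmax⟩ := Set.Finite.exists_maximalFor id
      {J : Set V | DkIndep T k J ∧ u ∈ J} (Set.toFinite _) ⟨{u}, hsingle⟩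
    refine ⟨J, ⟨hJmem.1, ?_⟩, hJmem.2⟩
    intro J'' hind'' hsub
    exact Set.Subset.antisymm (hJmax ⟨hind'', hsub hJmem.2⟩ hsub) hsub
  have hS1pos : 1 ≤ S1.ncard := by
    obtain ⟨J, hJ⟩ := hex
    have : S1.Nonempty := ⟨J, hJ⟩
    have := (Set.ncard_pos (Set.toFinite _)).mpr this
    omega
  constructor
  · rw [hT'card, hcard]
    omega
  · intro huniq
    obtain ⟨J0, hJ0, huniq'⟩ := huniq
    have : S1 = {J0} := by
      apply Set.eq_singleton_iff_unique_mem.mpr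
      exact ⟨hJ0, fun J hJ => huniq' J hJ⟩
    rw [hT'card, hcard, this, Set.ncard_singleton]
    omega
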